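/- Let m₁, m₂, m₃ be markings of an ωPN and σ a sequence of transitions with m₁ →σ m₂. Let P′ = {p | some transition in σ has O(t)(p) = ω}. If m₃(p) ≥ m₂(p) for all p ∈ P′ and m₃(p) = m₂(p) for all p ∉ P′, then m₁ →σ m₃. -/
import Mathlib


/-- An ω-Petri net over a set of places `P`: a set `T` of transitions,
each with input and output valuations in ℕ ∪ {ω} (modelled as `WithTop ℕ`). -/
structure OmegaPN (P : Type) where
  T : Type
  I : T → P → WithTop ℕ
  O : T → P → WithTop ℕ

namespace OmegaPN

variable {P : Type}

/-- Concrete firing: `t` is firable from `m` (i.e. `m p ≥ I t p` whenever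
`I t p ≠ ω`) and `m'` is obtained by consuming `i p` tokens (with `i p = I t p`
if finite, an arbitrary value `≤ m p` if `I t p = ω`) and producing `o p` tokens
(with `o p = O t p` if finite, arbitrary if `O t p = ω`) in each place `p`. -/
def Fires (N : OmegaPN P) (t : N.T) (m m' : P → ℕ) : Prop :=
  ∃ i o : P → ℕ,
    (∀ p, N.I t p ≠ ⊤ → (i p : WithTop ℕ) = N.I t p) ∧
    (∀ p, N.O t p ≠ ⊤ → (o p : WithTop ℕ) = N.O t p) ∧
    (∀ p, i p ≤ m p) ∧
    (∀ p, m' p = m p - i p + o p)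

/-- `m →σ m'` : firing the finite sequence `σ` of transitions from `m` can yield `m'`. -/
inductive FiresSeq (N : OmegaPN P) : List N.T → (P → ℕ) → (P → ℕ) → Prop
  | nil (m : P → ℕ) : FiresSeq N [] m m
  | cons {t : N.T} {σ : List N.T} {m m₁ m₂ : P → ℕ} :
      N.Fires t m m₁ → FiresSeq N σ m₁ m₂ → FiresSeq N (t :: σ) m m₂

end OmegaPN

open OmegaPN

/-- If `m₁ →σ m₂`, and `m₃` dominates `m₂` on the places receiving an ω-output
in σ and agrees with `m₂` elsewhere, then `m₁ →σ m₃` as well. -/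
theorem reachable_upward_closed {P : Type} (N : OmegaPN P)
    (σ : List N.T) (m₁ m₂ m₃ : P → ℕ)
    (h1 : N.FiresSeq σ m₁ m₂)
    (h2 : ∀ p, (∃ t ∈ σ, N.O t p = ⊤) → m₂ p ≤ m₃ p)
    (h3 : ∀ p, ¬ (∃ t ∈ σ, N.O t p = ⊤) → m₃ p = m₂ p) :
    N.FiresSeq σ m₁ m₃ := by
  induction h1 generalizing m₃ with
  | nil m =>
    have : m₃ = m := by funext p; exact h3 p (by simp)
    rw [this]; exact FiresSeq.nil m
  | @cons t σ m m₁' m₂ hf hs ih =>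
    obtain ⟨i, o, hi, ho, hle, heq⟩ := hf
    classical
    set c : P → ℕ := fun p => if ∃ t' ∈ σ, N.O t' p = ⊤ then 0 else m₃ p - m₂ p with hc
    have hm23 : ∀ p, m₂ p ≤ m₃ p := by
      intro p
      by_cases h : ∃ t' ∈ t :: σ, N.O t' p = ⊤
      · exact h2 p h
      · exact (h3 p h).ge
    have hcz : ∀ p, N.O t p ≠ ⊤ → c p = 0 := by
      intro p hp
      simp only [hc]
      split
      · rfl
      · rename_i hns
        have hne : ¬ ∃ t' ∈ t :: σ, N.O t' p = ⊤ := by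
          rintro ⟨t', ht', hω⟩
          rcases List.mem_cons.mp ht' with rfl | h'
          · exact hp hω
          · exact hns ⟨t', h', hω⟩
        have := h3 p hne
        omega
    have hf' : N.Fires t m (fun p => m₁' p + c p) := by
      refine ⟨i, fun p => o p + c p, hi, ?_, hle, ?_⟩
      · intro p hp
        simp only [hcz p hp, Nat.add_zero]
        exact ho p hp
      · intro p
        have := heq p
        simp only
        omega
    -- apply IH with m₃' p = if ω later then m₃ p else m₂ p
    have hih : N.FiresSeq σ m₁' (fun p => if ∃ t' ∈ σ, N.O t' p = ⊤ then m₃ p else m₂ p) := by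
      apply ih
      · intro p hp
        simp only [if_pos hp]
        exact hm23 p
      · intro p hp
        simp only [if_neg hp]
    -- monotonicity: shift the whole sequence by c
    have mono : ∀ (τ : List N.T) (a b : P → ℕ), N.FiresSeq τ a b →
        N.FiresSeq τ (fun p => a p + c p) (fun p => b p + c p) := by
      intro τ a b h
      induction h with
      | nil m => exact FiresSeq.nil _
      | @cons t' τ' a b' b'' hf1 _ ih1 =>
        obtain ⟨i1, o1, hi1, ho1, hle1, heq1⟩ := hf1
        refine FiresSeq.cons ⟨i1, o1, hi1, ho1, fun p => le_trans (hle1 p) (Nat.le_add_right _ _), ?_⟩ ih1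
        intro p
        have := heq1 p
        have := hle1 p
        simp only
        omega
    have := mono σ _ _ hih
    have hfinal : (fun p => (if ∃ t' ∈ σ, N.O t' p = ⊤ then m₃ p else m₂ p) + c p) = m₃ := by
      funext p
      simp only [hc]
      split
      · omega
      · have := hm23 p
        omega
    rw [hfinal] at this
    exact FiresSeq.cons hf' this
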